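/- Let K = ℚ(√−D) be an imaginary quadratic field with ring of integers O_K. For x ≥ 2, 0 ≤ h ≤ x, and 1 ≤ m ≤ 2√(x+h), the number of elements α ∈ O_K with (√x − 1)²/m² ≤ N(α) ≤ (√(x+h) + 1)²/m² is ≪ h/m² + √(x+h)/m, where N denotes the norm and the implied constant is absolute over the imaginary quadratic fields considered. -/

import Mathlib

/-!
STATEMENT 14: Let `K = ℚ(√−D)` be an imaginary quadratic field.  For `x ≥ 2`, `0 ≤ h ≤ x`
and `1 ≤ m ≤ 2√(x+h)`, the number of `α ∈ O_K` with
`(√x − 1)²/m² ≤ N(α) ≤ (√(x+h) + 1)²/m²` is `≪ h/m² + √(x+h)/m`, with an absolute implied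
constant over the imaginary quadratic fields considered.
-/

open NumberField MeasureTheory Metric
open scoped ENNReal NNReal

lemma exists_embedding_norm_eq_normSq (K : Type) [Field K] [NumberField K]
    (h2 : Module.finrank ℚ K = 2) (hreal : ∀ ψ : K →+* ℝ, False) :
    ∃ φ : K →+* ℂ, ∀ z : K, ((Algebra.norm ℚ z : ℚ) : ℝ) = Complex.normSq (φ z) := by
  classical
  have hcard : Fintype.card (K →+* ℂ) = 2 := by
    rw [NumberField.Embeddings.card K ℂ, h2]
  have hne2 : Nonempty (K →+* ℂ) := by
    rw [← Fintype.card_pos_iff, hcard]; norm_num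
  obtain ⟨φ⟩ := hne2
  refine ⟨φ, fun z => ?_⟩
  have hne : NumberField.ComplexEmbedding.conjugate φ ≠ φ := by
    intro h
    exact hreal (NumberField.ComplexEmbedding.IsReal.embedding
      (NumberField.ComplexEmbedding.isReal_iff.mpr h))
  have huniv : (Finset.univ : Finset (K →+* ℂ)) =
      {NumberField.ComplexEmbedding.conjugate φ, φ} := by
    symm
    apply Finset.eq_univ_of_card
    rw [hcard, Finset.card_insert_of_notMem (by simp [hne]), Finset.card_singleton]
  have hprod : ((Algebra.norm ℚ z : ℚ) : ℂ) = ∏ ψ : K →+* ℂ, ψ z := by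
    have h1 := Algebra.norm_eq_prod_embeddings ℚ ℂ z
    rw [show ((Algebra.norm ℚ z : ℚ) : ℂ) = algebraMap ℚ ℂ (Algebra.norm ℚ z) by norm_cast, h1]
    exact (Fintype.prod_equiv (RingHom.equivRatAlgHom K ℂ) (fun ψ : K →+* ℂ => ψ z)
      (fun σ => σ z) (fun ψ => rfl)).symm
  rw [huniv, Finset.prod_insert (by simp [hne]), Finset.prod_singleton] at hprod
  have hconj : (NumberField.ComplexEmbedding.conjugate φ) z = (starRingEnd ℂ) (φ z) := rfl
  rw [hconj] at hprod
  have : ((Algebra.norm ℚ z : ℚ) : ℂ) = ((Complex.normSq (φ z) : ℝ) : ℂ) := by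
    rw [hprod, mul_comm, Complex.mul_conj]
  exact_mod_cast this

lemma packing_annulus (T : Finset ℂ) (r R : ℝ) (hr : 0 ≤ r) (hrR : r ≤ R)
    (hsep : ∀ z ∈ T, ∀ w ∈ T, z ≠ w → 1 ≤ dist z w)
    (hmem : ∀ z ∈ T, r ≤ ‖z‖ ∧ ‖z‖ ≤ R) :
    (T.card : ℝ) ≤ 4 * ((R + 1/2)^2 - (max (r - 1/2) 0)^2) := by
  set t := max (r - 1/2) 0 with ht
  have ht0 : 0 ≤ t := le_max_right _ _
  have hR0 : 0 ≤ R := hr.trans hrR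
  have htR : t ≤ R + 1/2 := by
    apply max_le <;> linarith
  set U : Set ℂ := ⋃ z ∈ T, ball z (1/2) with hU
  have hdisj : (T : Set ℂ).PairwiseDisjoint (fun z => ball z (1/2)) := by
    intro z hz w hw hzw
    exact ball_disjoint_ball (by linarith [hsep z hz w hw hzw])
  have hUvol : volume U = (T.card : ℝ≥0∞) * (ENNReal.ofReal (1/2) ^ 2 * NNReal.pi) := by
    rw [hU, measure_biUnion_finset hdisj (fun z _ => measurableSet_ball)]
    simp [Complex.volume_ball]
  have hUsub : U ⊆ closedBall 0 (R + 1/2) \ ball 0 t := by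
    intro w hw
    simp only [hU, Set.mem_iUnion, mem_ball] at hw
    obtain ⟨z, hz, hwz⟩ := hw
    obtain ⟨hz1, hz2⟩ := hmem z hz
    have habs : dist z 0 = ‖z‖ := by simp [Complex.dist_eq]
    have h1 : dist w 0 ≤ R + 1/2 := by
      calc dist w 0 ≤ dist w z + dist z 0 := dist_triangle _ _ _
        _ ≤ R + 1/2 := by rw [habs]; linarith
    have h2 : t ≤ dist w 0 := by
      have := dist_triangle z w 0
      rw [dist_comm z w] at this
      apply max_le
      · rw [habs] at this; linarith [dist_nonneg (x := w) (y := (0:ℂ))]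
      · exact dist_nonneg
    exact ⟨mem_closedBall.mpr h1, fun hc => absurd (mem_ball.mp hc) (not_lt.mpr h2)⟩
  have hdisj2 : Disjoint U (ball (0:ℂ) t) :=
    Set.disjoint_left.mpr (fun w hw => (hUsub hw).2)
  have hsub2 : U ∪ ball (0:ℂ) t ⊆ closedBall 0 (R + 1/2) :=
    Set.union_subset (fun w hw => (hUsub hw).1)
      ((ball_subset_closedBall).trans (closedBall_subset_closedBall htR))
  have hmeas : volume U + volume (ball (0:ℂ) t) ≤ volume (closedBall (0:ℂ) (R + 1/2)) := by
    rw [← measure_union hdisj2 measurableSet_ball]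
    exact measure_mono hsub2
  rw [hUvol, Complex.volume_ball, Complex.volume_closedBall] at hmeas
  have hppos : (0:ℝ≥0∞) < NNReal.pi := by
    simp only [ENNReal.coe_pos]
    exact_mod_cast Real.pi_pos
  have hkey : (T.card : ℝ≥0∞) * ENNReal.ofReal (1/2) ^ 2 + ENNReal.ofReal t ^ 2 ≤
      ENNReal.ofReal (R + 1/2) ^ 2 := by
    have := ENNReal.mul_le_mul_iff_left (a := (T.card : ℝ≥0∞) * ENNReal.ofReal (1/2) ^ 2 + ENNReal.ofReal t ^ 2) (b := ENNReal.ofReal (R + 1/2) ^ 2) hppos.ne' ENNReal.coe_ne_top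
    rw [← this]
    calc ((T.card : ℝ≥0∞) * ENNReal.ofReal (1/2) ^ 2 + ENNReal.ofReal t ^ 2) * NNReal.pi
        = (T.card : ℝ≥0∞) * (ENNReal.ofReal (1/2) ^ 2 * NNReal.pi) + ENNReal.ofReal t ^ 2 * NNReal.pi := by ring
      _ ≤ _ := hmeas
  have hreal : (T.card : ℝ) * (1/2)^2 + t^2 ≤ (R + 1/2)^2 := by
    have h1 : ENNReal.ofReal ((T.card : ℝ) * (1/2)^2 + t^2) ≤ ENNReal.ofReal ((R + 1/2)^2) := by
      rw [ENNReal.ofReal_add (by positivity) (by positivity),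
        ENNReal.ofReal_mul (by positivity), ENNReal.ofReal_pow (by norm_num),
        ENNReal.ofReal_pow ht0, ENNReal.ofReal_pow (by linarith), ENNReal.ofReal_natCast]
      exact hkey
    exact (ENNReal.ofReal_le_ofReal_iff (by positivity)).mp h1
  nlinarith

set_option maxHeartbeats 1000000 in
/-- There is an absolute constant `C > 0` such that for every imaginary quadratic field `K`,
all `x ≥ 2`, `0 ≤ h ≤ x` and every integer `1 ≤ m ≤ 2√(x+h)`, the number of elements
`α ∈ O_K` with `(√x − 1)²/m² ≤ N(α) ≤ (√(x+h) + 1)²/m²` is at most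
`C (h/m² + √(x+h)/m)`. -/
theorem norm_interval_count_imaginary_quadratic :
    ∃ C : ℝ, 0 < C ∧
      ∀ (K : Type) [Field K] [NumberField K],
        Module.finrank ℚ K = 2 → (∀ φ : K →+* ℝ, False) →
        ∀ x h : ℝ, 2 ≤ x → 0 ≤ h → h ≤ x →
        ∀ m : ℕ, 1 ≤ m → (m : ℝ) ≤ 2 * Real.sqrt (x + h) →
          (Nat.card {α : 𝓞 K //
              (Real.sqrt x - 1) ^ 2 / (m : ℝ) ^ 2 ≤
                ((Algebra.norm ℚ (algebraMap (𝓞 K) K α) : ℚ) : ℝ) ∧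
              ((Algebra.norm ℚ (algebraMap (𝓞 K) K α) : ℚ) : ℝ) ≤
                (Real.sqrt (x + h) + 1) ^ 2 / (m : ℝ) ^ 2} : ℝ) ≤
            C * (h / (m : ℝ) ^ 2 + Real.sqrt (x + h) / (m : ℝ)) := by
  refine ⟨40, by norm_num, ?_⟩
  intro K _ _ h2 hreal x h hx hh0 hhx m hm1 hm2
  classical
  set s := Real.sqrt (x + h) with hs
  set sx := Real.sqrt x with hsx
  have hm0 : (0:ℝ) < m := by exact_mod_cast hm1
  have hm1' : (1:ℝ) ≤ m := by exact_mod_cast hm1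
  have hxh0 : (0:ℝ) ≤ x + h := by linarith
  have hs2 : s ^ 2 = x + h := Real.sq_sqrt hxh0
  have hsx2 : sx ^ 2 = x := Real.sq_sqrt (by linarith)
  have hsx1 : 1 ≤ sx := by
    rw [hsx, show (1:ℝ) = Real.sqrt 1 by simp]
    exact Real.sqrt_le_sqrt (by linarith)
  have hs1 : sx ≤ s := Real.sqrt_le_sqrt (by linarith)
  have hRHS0 : (0:ℝ) ≤ 40 * (h / (m : ℝ) ^ 2 + s / (m : ℝ)) := by positivity
  set S : Set (𝓞 K) := {α : 𝓞 K |
      (sx - 1) ^ 2 / (m : ℝ) ^ 2 ≤ ((Algebra.norm ℚ (algebraMap (𝓞 K) K α) : ℚ) : ℝ) ∧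
      ((Algebra.norm ℚ (algebraMap (𝓞 K) K α) : ℚ) : ℝ) ≤ (s + 1) ^ 2 / (m : ℝ) ^ 2} with hS
  show (Nat.card ↥S : ℝ) ≤ 40 * (h / (m : ℝ) ^ 2 + s / (m : ℝ))
  by_cases hfin : S.Finite
  swap
  · have : Infinite ↥S := Set.Infinite.to_subtype hfin
    rw [Nat.card_eq_zero_of_infinite]
    simpa using hRHS0
  -- finite case
  obtain ⟨φ, hφ⟩ := exists_embedding_norm_eq_normSq K h2 hreal
  have hcard : Nat.card ↥S = hfin.toFinset.card := by
    rw [Nat.card_coe_set_eq, Set.ncard_eq_toFinset_card S hfin]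
  -- the map into ℂ
  set f : 𝓞 K → ℂ := fun α => φ (algebraMap (𝓞 K) K α) with hf
  have hinj : Function.Injective f :=
    fun a b hab => RingOfIntegers.coe_injective (φ.injective hab)
  set T : Finset ℂ := hfin.toFinset.image f with hT
  have hTcard : T.card = hfin.toFinset.card :=
    Finset.card_image_of_injective _ hinj
  -- norm of integers: separation
  have hsep : ∀ z ∈ T, ∀ w ∈ T, z ≠ w → 1 ≤ dist z w := by
    intro z hz w hw hzw
    simp only [hT, Finset.mem_image] at hz hw
    obtain ⟨a, _, rfl⟩ := hz
    obtain ⟨b, _, rfl⟩ := hw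
    have hab : a ≠ b := fun hc => hzw (by rw [hc])
    have hd : f a - f b = φ (algebraMap (𝓞 K) K (a - b)) := by
      rw [hf]; simp [map_sub]
    have hnorm : ((Algebra.norm ℤ (a - b) : ℚ) : ℝ) = Complex.normSq (f a - f b) := by
      rw [hd, ← hφ, Algebra.coe_norm_int]
    have hne : Algebra.norm ℤ (a - b) ≠ 0 :=
      Algebra.norm_ne_zero_iff.mpr (sub_ne_zero.mpr hab)
    have hnn : 0 ≤ Algebra.norm ℤ (a - b) := by
      have : (0:ℝ) ≤ ((Algebra.norm ℤ (a - b) : ℚ) : ℝ) := by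
        rw [hnorm]; exact Complex.normSq_nonneg _
      exact_mod_cast this
    have h1 : (1:ℤ) ≤ Algebra.norm ℤ (a - b) := lt_of_le_of_ne hnn (Ne.symm hne)
    have h1' : (1:ℝ) ≤ Complex.normSq (f a - f b) := by
      rw [← hnorm]; exact_mod_cast h1
    rw [Complex.dist_eq]
    have := Complex.sq_norm (f a - f b)
    nlinarith [norm_nonneg (f a - f b)]
  -- annulus membership
  set r : ℝ := (sx - 1) / m with hr
  set R : ℝ := (s + 1) / m with hR
  have hr0 : 0 ≤ r := by apply div_nonneg <;> linarith
  have hrR : r ≤ R := by rw [hr, hR]; exact (div_le_div_iff_of_pos_right hm0).mpr (by linarith)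
  have hmem : ∀ z ∈ T, r ≤ ‖z‖ ∧ ‖z‖ ≤ R := by
    intro z hz
    simp only [hT, Finset.mem_image] at hz
    obtain ⟨a, ha, rfl⟩ := hz
    rw [Set.Finite.mem_toFinset] at ha
    obtain ⟨ha1, ha2⟩ := ha
    have hnormsq : Complex.normSq (f a) = ((Algebra.norm ℚ (algebraMap (𝓞 K) K a) : ℚ) : ℝ) :=
      (hφ _).symm
    have habs : ‖f a‖ ^ 2 = Complex.normSq (f a) := Complex.sq_norm _
    constructor
    · have : r ^ 2 ≤ ‖f a‖ ^ 2 := by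
        rw [habs, hnormsq, hr, div_pow]; exact ha1
      nlinarith [norm_nonneg (f a)]
    · have : ‖f a‖ ^ 2 ≤ R ^ 2 := by
        rw [habs, hnormsq, hR, div_pow]; exact ha2
      nlinarith [norm_nonneg (f a), div_nonneg (by linarith : (0:ℝ) ≤ s + 1) hm0.le]
  have hpack := packing_annulus T r R hr0 hrR hsep hmem
  rw [hTcard] at hpack
  rw [hcard]
  refine hpack.trans ?_
  -- final arithmetic
  set t := max (r - 1/2) 0 with ht
  have ht2 : r ^ 2 - r ≤ t ^ 2 := by
    rcases le_total r (1/2) with hc | hc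
    · rw [ht, max_eq_right (by linarith)]; nlinarith
    · rw [ht, max_eq_left (by linarith)]; nlinarith
  have hexp : (R + 1/2)^2 = R^2 + R + 1/4 := by ring
  have hkey : 4 * ((R + 1/2)^2 - t^2) ≤ 4 * (R^2 - r^2 + R + r + 1/4) := by
    rw [hexp]; linarith
  refine hkey.trans ?_
  have hms : (0:ℝ) < (m : ℝ)^2 := by positivity
  have hR2 : (R^2 - r^2) * (m:ℝ)^2 = h + 2*s + 2*sx := by
    rw [hR, hr, div_pow, div_pow]
    field_simp
    nlinarith
  have e1 : R * (m:ℝ) = s + 1 := by rw [hR]; field_simp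
  have e2 : r * (m:ℝ) = sx - 1 := by rw [hr]; field_simp
  have hrhs : 40 * (h / (m:ℝ)^2 + s / (m:ℝ)) * (m:ℝ)^2 = 40*h + 40*s*(m:ℝ) := by
    field_simp
  rw [← mul_le_mul_iff_of_pos_right hms]
  rw [hrhs]
  have hlhs : 4 * (R^2 - r^2 + R + r + 1/4) * (m:ℝ)^2
      = 4 * ((R^2 - r^2) * (m:ℝ)^2) + 4*(R*(m:ℝ))*(m:ℝ) + 4*(r*(m:ℝ))*(m:ℝ) + (m:ℝ)^2 := by
    ring
  rw [hlhs, hR2, e1, e2]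
  have hs1' : 1 ≤ s := le_trans hsx1 hs1
  nlinarith [mul_nonneg (by linarith : (0:ℝ) ≤ s) (by linarith : (0:ℝ) ≤ (m:ℝ) - 1),
    mul_nonneg (by linarith : (0:ℝ) ≤ s - 1) (by linarith : (0:ℝ) ≤ (m:ℝ)),
    mul_nonneg (by linarith : (0:ℝ) ≤ 2*s - (m:ℝ)) (by linarith : (0:ℝ) ≤ (m:ℝ))]
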